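/- Let p ≥ 5 be prime and let F = Σ_{m≥0} φ_m (q')^m and G = Σ_{m≥0} ψ_m (q')^m be formal q'-series with φ_m, ψ_m ∈ Z_(p)[ξ, ξ^{-1}][[q]] (power series in q, Laurent polynomials in ξ). Suppose ψ_0 ≡ 0 mod p, ψ_1 ≢ 0 mod p, and F ≡ H·G mod p for some series H = Σ φ_m^{(1)} (q')^m with coefficients in Z_(p)[ξ,ξ^{-1}][[q]]. If φ_m ≡ 0 mod p for all 0 ≤ m ≤ M, then φ_m^{(1)} ≡ 0 mod p for all 0 ≤ m ≤ M − 1. -/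

import Mathlib

section Aux

variable {A : Type*} [CommRing A]

lemma powerSeries_C_dvd_iff (c : A) (f : PowerSeries A) :
    (PowerSeries.C c) ∣ f ↔ ∀ n, c ∣ PowerSeries.coeff n f := by
  constructor
  · rintro ⟨g, rfl⟩ n
    rw [PowerSeries.coeff_C_mul]
    exact Dvd.intro _ rfl
  · intro h
    refine ⟨PowerSeries.mk fun n => (h n).choose, ?_⟩
    ext n
    rw [PowerSeries.coeff_C_mul, PowerSeries.coeff_mk]
    exact (h n).choose_spec

lemma prime_powerSeries_C {c : A} (hc : Prime c) : Prime (PowerSeries.C c) := by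
  refine ⟨?_, ?_, ?_⟩
  · intro h
    apply hc.1
    have := congrArg (PowerSeries.constantCoeff) h
    simpa using this
  · intro h
    have := h.map (PowerSeries.constantCoeff)
    simp only [PowerSeries.constantCoeff_C] at this
    exact hc.2.1 this
  · intro f g hfg
    by_contra hcon
    push_neg at hcon
    obtain ⟨hf, hg⟩ := hcon
    rw [powerSeries_C_dvd_iff] at hf hg
    push_neg at hf hg
    classical
    set n := Nat.find hf with hn
    set m := Nat.find hg with hm
    have hmul := (powerSeries_C_dvd_iff c (f * g)).mp hfg (n + m)
    rw [PowerSeries.coeff_mul] at hmul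
    have hmem : ((n, m) : ℕ × ℕ) ∈ Finset.HasAntidiagonal.antidiagonal (n + m) := by simp
    rw [← Finset.add_sum_erase _ _ hmem] at hmul
    have hrest : c ∣ ∑ x ∈ (Finset.HasAntidiagonal.antidiagonal (n + m)).erase (n, m),
        PowerSeries.coeff x.1 f * PowerSeries.coeff x.2 g := by
      refine Finset.dvd_sum ?_
      rintro ⟨i, j⟩ hx
      rw [Finset.mem_erase, Finset.HasAntidiagonal.mem_antidiagonal] at hx
      obtain ⟨hne, hij⟩ := hx
      rcases lt_trichotomy i n with h | h | h
      · exact Dvd.dvd.mul_right (of_not_not (Nat.find_min hf h)) _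
      · have hj : j = m := by omega
        exact absurd (by rw [h, hj]) hne
      · have hj : j < m := by omega
        exact Dvd.dvd.mul_left (of_not_not (Nat.find_min hg hj)) _
    have hkey : c ∣ PowerSeries.coeff n f * PowerSeries.coeff m g := by
      have := dvd_sub hmul hrest
      simpa using this
    rcases hc.2.2 _ _ hkey with h | h
    · exact Nat.find_spec hf h
    · exact Nat.find_spec hg h

lemma prime_laurent_C {c : A} (hc : Prime c) : Prime (LaurentPolynomial.C c) := by
  have hcP : Prime (Polynomial.C c) := Polynomial.prime_C_iff.mpr hc
  have hX : ¬ (Polynomial.C c ∣ (Polynomial.X : Polynomial A)) := by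
    rintro ⟨k, hk⟩
    apply hc.2.1
    have h1 : (Polynomial.X : Polynomial A).coeff 1 = (Polynomial.C c * k).coeff 1 := by rw [← hk]
    rw [Polynomial.coeff_X_one, Polynomial.coeff_C_mul] at h1
    exact IsUnit.of_mul_eq_one _ h1.symm
  have key : ∀ F : Polynomial A, LaurentPolynomial.C c ∣ F.toLaurent → Polynomial.C c ∣ F := by
    rintro F ⟨k, hk⟩
    obtain ⟨s, K, hK⟩ := LaurentPolynomial.exists_T_pow k
    have h1 : (F * Polynomial.X ^ s).toLaurent = (Polynomial.C c * K).toLaurent := by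
      rw [map_mul, map_mul, Polynomial.toLaurent_X_pow, Polynomial.toLaurent_C, hk, hK, mul_assoc]
    have h2 : F * Polynomial.X ^ s = Polynomial.C c * K := Polynomial.toLaurent_injective h1
    have h3 : Polynomial.C c ∣ F * Polynomial.X ^ s := ⟨K, h2⟩
    rcases hcP.2.2 _ _ h3 with h | h
    · exact h
    · exact absurd (hcP.dvd_of_dvd_pow h) hX
  refine ⟨?_, ?_, ?_⟩
  · intro h
    apply hc.1
    have h1 : (Polynomial.C c).toLaurent = 0 := by rw [Polynomial.toLaurent_C]; exact h
    exact Polynomial.C_eq_zero.mp (Polynomial.toLaurent_eq_zero.mp h1)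
  · intro h
    have h1 : LaurentPolynomial.C c ∣ (Polynomial.toLaurent (1 : Polynomial A)) := by
      simpa using h.dvd
    exact hc.2.1 (Polynomial.isUnit_C.mp (isUnit_of_dvd_one (key 1 h1)))
  · rintro f g ⟨k, hfg⟩
    obtain ⟨a, F, hF⟩ := LaurentPolynomial.exists_T_pow f
    obtain ⟨b, G, hG⟩ := LaurentPolynomial.exists_T_pow g
    have h1 : (F * G).toLaurent = LaurentPolynomial.C c * (k * LaurentPolynomial.T (a + b)) := by
      rw [map_mul, hF, hG]
      have : f * LaurentPolynomial.T a * (g * LaurentPolynomial.T b)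
          = f * g * LaurentPolynomial.T (a + b) := by
        rw [LaurentPolynomial.T_add]; ring
      rw [this, hfg, mul_assoc]
    have h2 : Polynomial.C c ∣ F * G := key _ ⟨_, h1⟩
    have hback : ∀ (h : LaurentPolynomial A) (t : ℕ) (Hp : Polynomial A),
        Hp.toLaurent = h * LaurentPolynomial.T t → Polynomial.C c ∣ Hp →
        LaurentPolynomial.C c ∣ h := by
      rintro h t Hp hHp ⟨w, hw⟩
      refine ⟨w.toLaurent * LaurentPolynomial.T (-t), ?_⟩
      have h3 : h * LaurentPolynomial.T t * LaurentPolynomial.T (-t) = h := by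
        rw [LaurentPolynomial.mul_T_assoc]
        simp
      calc h = h * LaurentPolynomial.T t * LaurentPolynomial.T (-t) := h3.symm
        _ = Hp.toLaurent * LaurentPolynomial.T (-t) := by rw [hHp]
        _ = LaurentPolynomial.C c * (w.toLaurent * LaurentPolynomial.T (-t)) := by
            rw [hw, map_mul, Polynomial.toLaurent_C, mul_assoc]
    rcases hcP.2.2 _ _ h2 with h | h
    · exact Or.inl (hback f a F hF h)
    · exact Or.inr (hback g b G hG h)

end Aux

lemma prime_loc_natCast (p : ℕ) (hp : p.Prime) (P : Ideal ℤ) [P.IsPrime]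
    (hP : P = Ideal.span {(p : ℤ)}) : Prime ((p : ℕ) : Localization.AtPrime P) := by
  have hle : P.primeCompl ≤ nonZeroDivisors ℤ := by
    intro x hx
    refine mem_nonZeroDivisors_of_ne_zero ?_
    rintro rfl
    exact hx (by rw [hP]; exact Ideal.zero_mem _)
  have hinj : Function.Injective (algebraMap ℤ (Localization.AtPrime P)) :=
    IsLocalization.injective _ hle
  have h0 : ((p : ℕ) : Localization.AtPrime P) ≠ 0 := by
    have : ((p : ℤ) : ℤ) ≠ 0 := by exact_mod_cast hp.pos.ne'
    intro h
    apply this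
    apply hinj
    rw [map_natCast, map_zero]
    exact h
  rw [← Ideal.span_singleton_prime h0]
  have hmap : Ideal.map (algebraMap ℤ (Localization.AtPrime P)) P
      = Ideal.span {((p : ℕ) : Localization.AtPrime P)} := by
    have h2 := congrArg (Ideal.map (algebraMap ℤ (Localization.AtPrime P))) hP
    rw [Ideal.map_span, Set.image_singleton, map_natCast] at h2
    exact h2
  rw [← hmap, Localization.AtPrime.map_eq_maximalIdeal]
  infer_instance

/-- The Fourier–Jacobi shifting step: let `p ≥ 5` be prime and let
`F = Σ φ_m (q')^m`, `G = Σ ψ_m (q')^m`, `H = Σ φ_m⁽¹⁾ (q')^m` be formal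
`q'`-series with coefficients in `ℤ_(p)[ξ,ξ⁻¹][[q]]`.  If `ψ₀ ≡ 0`,
`ψ₁ ≢ 0 (mod p)`, `F ≡ H·G (mod p)` (coefficientwise, `hFG`), and `φ_m ≡ 0
(mod p)` for all `m ≤ M`, then `φ_m⁽¹⁾ ≡ 0 (mod p)` for all `m ≤ M - 1`. -/
theorem stmt10 (p : ℕ) (hp : p.Prime) (hp5 : 5 ≤ p)
    (P : Ideal ℤ) [P.IsPrime] (hP : P = Ideal.span {(p : ℤ)})
    (φ ψ φ₁ : ℕ → PowerSeries (LaurentPolynomial (Localization.AtPrime P)))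
    (M : ℕ)
    (hψ0 : (↑p : PowerSeries (LaurentPolynomial (Localization.AtPrime P))) ∣ ψ 0)
    (hψ1 : ¬ (↑p : PowerSeries (LaurentPolynomial (Localization.AtPrime P))) ∣ ψ 1)
    (hFG : ∀ m : ℕ, (↑p : PowerSeries (LaurentPolynomial (Localization.AtPrime P))) ∣
      (φ m - ∑ j ∈ Finset.range (m + 1), φ₁ j * ψ (m - j)))
    (hφ : ∀ m ≤ M, (↑p : PowerSeries (LaurentPolynomial (Localization.AtPrime P))) ∣ φ m) :
    ∀ m : ℕ, m + 1 ≤ M →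
      (↑p : PowerSeries (LaurentPolynomial (Localization.AtPrime P))) ∣ φ₁ m := by
  set R := Localization.AtPrime P with hR
  have hprime : Prime ((p : ℕ) : PowerSeries (LaurentPolynomial R)) := by
    have h1 : Prime ((p : ℕ) : R) := prime_loc_natCast p hp P hP
    have h2 : Prime (LaurentPolynomial.C ((p : ℕ) : R)) := prime_laurent_C h1
    have h3 : Prime (PowerSeries.C (LaurentPolynomial.C ((p : ℕ) : R))) :=
      prime_powerSeries_C h2
    rwa [map_natCast, map_natCast] at h3
  intro m
  induction m using Nat.strong_induction_on with
  | _ m ih =>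
    intro hm
    have h1 := hFG (m + 1)
    have h2 : (↑p : PowerSeries (LaurentPolynomial R)) ∣ φ (m + 1) := hφ (m + 1) hm
    have hsum : (↑p : PowerSeries (LaurentPolynomial R)) ∣
        ∑ j ∈ Finset.range (m + 2), φ₁ j * ψ (m + 1 - j) := by
      have := dvd_sub h2 h1
      simpa using this
    rw [Finset.sum_range_succ, Finset.sum_range_succ] at hsum
    have hsmall : (↑p : PowerSeries (LaurentPolynomial R)) ∣
        ∑ j ∈ Finset.range m, φ₁ j * ψ (m + 1 - j) := by
      refine Finset.dvd_sum fun j hj => ?_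
      rw [Finset.mem_range] at hj
      exact Dvd.dvd.mul_right (ih j hj (by omega)) _
    have hlast : (↑p : PowerSeries (LaurentPolynomial R)) ∣ φ₁ (m + 1) * ψ (m + 1 - (m + 1)) := by
      simpa using Dvd.dvd.mul_left hψ0 (φ₁ (m + 1))
    have hmid : (↑p : PowerSeries (LaurentPolynomial R)) ∣ φ₁ m * ψ (m + 1 - m) := by
      have := dvd_sub (dvd_sub hsum hlast) hsmall
      simpa using this
    have hmid' : (↑p : PowerSeries (LaurentPolynomial R)) ∣ φ₁ m * ψ 1 := by
      have : m + 1 - m = 1 := by omega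
      rwa [this] at hmid
    rcases hprime.2.2 _ _ hmid' with h | h
    · exact h
    · exact absurd h hψ1
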